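/- arXiv:2106.07572 — 2 statements merged into one kernel-verified Lean document; each statement's English description precedes it below -/
import Mathlib

section
/- Let V be a finite-dimensional real inner product space with two inner products g and h, and suppose g(u,u) ≤ C·h(u,u) for all u ∈ V, where C > 0. Then the induced inner products g^k and h^k on the k-th exterior power Λ^k(V) satisfy g^k(w,w) ≤ C^k·h^k(w,w) for all w ∈ Λ^k(V). -/
open Module

lemma stmt0_diag
    (V : Type*) [AddCommGroup V] [Module ℝ V] [FiniteDimensional ℝ V]
    (g h : V →ₗ[ℝ] V →ₗ[ℝ] ℝ)
    (hg_symm : ∀ u v, g u v = g v u)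
    (hh_symm : ∀ u v, h u v = h v u) (hh_pos : ∀ u, u ≠ 0 → 0 < h u u) :
    ∃ (b : Basis (Fin (Module.finrank ℝ V)) ℝ V) (μ : Fin (Module.finrank ℝ V) → ℝ),
      (∀ i j, h (b i) (b j) = if i = j then 1 else 0) ∧
      (∀ i j, g (b i) (b j) = if i = j then μ i else 0) := by
  classical
  have hh_nonneg : ∀ u : V, 0 ≤ h u u := by
    intro u
    rcases eq_or_ne u 0 with rfl | hu
    · simp
    · exact (hh_pos u hu).le
  letI core : InnerProductSpace.Core ℝ V :=
  { inner := fun u v => h u v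
    conj_inner_symm := fun u v => by simpa using hh_symm v u
    re_inner_nonneg := fun u => by simpa using hh_nonneg u
    add_left := fun u v w => by simp
    smul_left := fun u v r => by simp
    definite := fun u hu => by
      by_contra h0
      exact (hh_pos u h0).ne' hu }
  letI : NormedAddCommGroup V := core.toNormedAddCommGroup
  letI : InnerProductSpace ℝ V := InnerProductSpace.ofCore core.toCore
  have hinner : ∀ x y : V, (inner ℝ x y : ℝ) = h x y := fun _ _ => rfl
  have hinj : Function.Injective (h : V →ₗ[ℝ] Module.Dual ℝ V) := by
    intro u v huv
    by_contra hne
    have h0 : h (u - v) (u - v) = 0 := by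
      simp [map_sub, huv]
    exact (hh_pos _ (sub_ne_zero.mpr hne)).ne' h0
  let e := LinearMap.linearEquivOfInjective (h : V →ₗ[ℝ] Module.Dual ℝ V) hinj
    (Subspace.dual_finrank_eq).symm
  let T : V →ₗ[ℝ] V := e.symm.toLinearMap ∘ₗ g
  have hT : ∀ u v, h (T u) v = g u v := by
    intro u v
    have h1 : e (T u) = g u := e.apply_symm_apply (g u)
    have h2 : e (T u) = (h : V →ₗ[ℝ] Module.Dual ℝ V) (T u) :=
      LinearMap.linearEquivOfInjective_apply _ _ _
    exact DFunLike.congr_fun (h2.symm.trans h1) v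
  have hTsym : T.IsSymmetric := by
    intro x y
    rw [hinner, hinner, hT, hh_symm, hT, hg_symm]
  let b0 := hTsym.eigenvectorBasis (n := Module.finrank ℝ V) rfl
  let μ := hTsym.eigenvalues (n := Module.finrank ℝ V) rfl
  have hortho : ∀ i j, h (b0 i) (b0 j) = if i = j then 1 else 0 := by
    intro i j
    have h2 := orthonormal_iff_ite.mp b0.orthonormal i j
    rw [hinner] at h2
    simpa using h2
  refine ⟨b0.toBasis, μ, ?_, ?_⟩
  · intro i j
    simpa [OrthonormalBasis.coe_toBasis] using hortho i j
  · intro i j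
    have h3 : g (b0 i) (b0 j) = h (T (b0 i)) (b0 j) := (hT _ _).symm
    show g (b0 i) (b0 j) = _
    rw [h3, hTsym.apply_eigenvectorBasis]
    show h (μ i • b0 i) (b0 j) = _
    simp only [map_smul, LinearMap.smul_apply, smul_eq_mul, hortho i j]
    by_cases hij : i = j <;> simp [hij, μ]

/-- If two inner products `g`, `h` on a finite-dimensional real vector
space `V` satisfy `g(u,u) ≤ C·h(u,u)` with `C > 0`, then the induced inner products
`gk`, `hk` on the `k`-th exterior power (characterized by the Gram determinant formula
on decomposable vectors `ι v₁ ∧ ... ∧ ι v_k`) satisfy `gk(w,w) ≤ C^k·hk(w,w)`. -/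
theorem stmt0
    (V : Type*) [AddCommGroup V] [Module ℝ V] [FiniteDimensional ℝ V]
    (g h : V →ₗ[ℝ] V →ₗ[ℝ] ℝ)
    (hg_symm : ∀ u v, g u v = g v u) (hg_pos : ∀ u, u ≠ 0 → 0 < g u u)
    (hh_symm : ∀ u v, h u v = h v u) (hh_pos : ∀ u, u ≠ 0 → 0 < h u u)
    (C : ℝ) (hC : 0 < C) (hgh : ∀ u, g u u ≤ C * h u u)
    (k : ℕ)
    -- the k-th exterior power, presented by its universal alternating map
    (Λ : Type*) [AddCommGroup Λ] [Module ℝ Λ]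
    (ι : V [⋀^Fin k]→ₗ[ℝ] Λ)
    (hspan : Submodule.span ℝ (Set.range ι) = ⊤)
    -- the induced inner products on the exterior power
    (gk hk : Λ →ₗ[ℝ] Λ →ₗ[ℝ] ℝ)
    (hgk : ∀ v w : Fin k → V, gk (ι v) (ι w) = Matrix.det (Matrix.of fun i j => g (v i) (w j)))
    (hhk : ∀ v w : Fin k → V, hk (ι v) (ι w) = Matrix.det (Matrix.of fun i j => h (v i) (w j)))
    (hgk_symm : ∀ w w', gk w w' = gk w' w) (hgk_nonneg : ∀ w, 0 ≤ gk w w)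
    (hhk_symm : ∀ w w', hk w w' = hk w' w) (hhk_nonneg : ∀ w, 0 ≤ hk w w) :
    ∀ w : Λ, gk w w ≤ C ^ k * hk w w := by
  classical
  intro w
  obtain ⟨b, μ, hb_h, hb_g⟩ := stmt0_diag V g h hg_symm hh_symm hh_pos
  have hμ_nonneg : ∀ i, 0 ≤ μ i := by
    intro i
    have := (hg_pos (b i) (b.ne_zero i)).le
    rwa [hb_g i i, if_pos rfl] at this
  have hμC : ∀ i, μ i ≤ C := by
    intro i
    have := hgh (b i)
    rwa [hb_g i i, hb_h i i, if_pos rfl, if_pos rfl, mul_one] at this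
  let S := {f : Fin k → Fin (Module.finrank ℝ V) // StrictMono f}
  haveI : Fintype S := Fintype.ofFinite S
  let E : S → Λ := fun f => ι (fun i => b (f.1 i))
  -- spanning
  have hterm : ∀ r : Fin k → Fin (Module.finrank ℝ V), ι (fun i => b (r i)) ∈ Submodule.span ℝ (Set.range E) := by
    intro r
    by_cases hr : Function.Injective r
    · set s : Finset (Fin (Module.finrank ℝ V)) := Finset.image r Finset.univ with hs
      have hcard : s.card = k := by
        rw [hs, Finset.card_image_of_injective _ hr, Finset.card_univ, Fintype.card_fin]
      set f := s.orderEmbOfFin hcard with hf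
      have hmem : ∀ i, r i ∈ s := fun i => Finset.mem_image_of_mem r (Finset.mem_univ i)
      set σ : Fin k → Fin k := fun i => (s.orderIsoOfFin hcard).symm ⟨r i, hmem i⟩ with hσ
      have hfσ : ∀ i, f (σ i) = r i := by
        intro i
        rw [hσ, hf]
        rw [← Finset.coe_orderIsoOfFin_apply]
        rw [(s.orderIsoOfFin hcard).apply_symm_apply]
      have hσinj : Function.Injective σ := by
        intro i j hij
        apply hr
        rw [← hfσ i, ← hfσ j, hij]
      let σe : Equiv.Perm (Fin k) := Equiv.ofBijective σ (Finite.injective_iff_bijective.mp hσinj)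
      have hcomp : (fun i => b (r i)) = (fun i => b (f i)) ∘ σe := by
        funext i
        simp only [Function.comp_apply, σe, Equiv.ofBijective_apply, hfσ i]
      rw [hcomp, ι.map_perm]
      have hE : ι (fun i => b (f i)) ∈ Submodule.span ℝ (Set.range E) :=
        Submodule.subset_span ⟨⟨(f : Fin k → Fin (Module.finrank ℝ V)), f.strictMono⟩, rfl⟩
      rcases Int.units_eq_one_or (Equiv.Perm.sign σe) with hs1 | hs1 <;> rw [hs1]
      · simpa using hE
      · simpa using Submodule.neg_mem _ hE
    · have hnr : ¬ Function.Injective (fun i => b (r i)) := by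
        intro hinj
        exact hr fun i j hij => hinj (by simp only [hij])
      rw [ι.map_eq_zero_of_not_injective _ hnr]
      exact Submodule.zero_mem _
  have hES : ∀ x : Λ, x ∈ Submodule.span ℝ (Set.range E) := by
    intro x
    have hle : Submodule.span ℝ (Set.range ⇑ι) ≤ Submodule.span ℝ (Set.range E) := by
      rw [Submodule.span_le]
      rintro y ⟨v, rfl⟩
      have expand : ι v = ∑ r : Fin k → Fin (Module.finrank ℝ V),
          (∏ i, b.repr (v i) (r i)) • ι (fun i => b (r i)) := by
        have h1 : ι v = ι (fun i => ∑ j : Fin (Module.finrank ℝ V), b.repr (v i) j • b j) := by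
          congr 1
          funext i
          exact (b.sum_repr (v i)).symm
        rw [h1]
        show ι.toMultilinearMap (fun i => ∑ j : Fin (Module.finrank ℝ V), b.repr (v i) j • b j) = _
        rw [ι.toMultilinearMap.map_sum]
        refine Finset.sum_congr rfl fun r _ => ?_
        exact ι.toMultilinearMap.map_smul_univ (fun i => b.repr (v i) (r i)) (fun i => b (r i))
      rw [expand]
      exact Submodule.sum_mem _ fun r _ => Submodule.smul_mem _ _ (hterm r)
    exact hle (hspan ▸ Submodule.mem_top : x ∈ Submodule.span ℝ (Set.range ⇑ι))
  obtain ⟨c, hc⟩ := (Submodule.mem_span_range_iff_exists_fun ℝ).mp (hES w)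
  -- orthogonality
  have hrowzero : ∀ f f' : S, f ≠ f' → ∃ i, ∀ j, f.1 i ≠ f'.1 j := by
    intro f f' hff
    by_contra hcon
    push_neg at hcon
    apply hff
    set s' : Finset (Fin (Module.finrank ℝ V)) := Finset.image f'.1 Finset.univ with hs'
    have hcard' : s'.card = k := by
      rw [hs', Finset.card_image_of_injective _ f'.2.injective, Finset.card_univ,
        Fintype.card_fin]
    have h1 : f.1 = s'.orderEmbOfFin hcard' := by
      apply Finset.orderEmbOfFin_unique hcard' _ f.2
      intro i
      obtain ⟨j, hj⟩ := hcon i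
      rw [hj, hs']
      exact Finset.mem_image_of_mem _ (Finset.mem_univ j)
    have h2 : f'.1 = s'.orderEmbOfFin hcard' := by
      apply Finset.orderEmbOfFin_unique hcard' _ f'.2
      intro i
      exact Finset.mem_image_of_mem _ (Finset.mem_univ i)
    exact Subtype.ext (h1.trans h2.symm)
  have hgE : ∀ f f' : S, gk (E f) (E f') = if f = f' then ∏ i, μ (f.1 i) else 0 := by
    intro f f'
    show gk (ι _) (ι _) = _
    rw [hgk]
    by_cases hff : f = f'
    · subst hff
      rw [if_pos rfl]
      have hdiag : (Matrix.of fun i j => g (b (f.1 i)) (b (f.1 j)))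
          = Matrix.diagonal (fun i => μ (f.1 i)) := by
        ext i j
        by_cases hij : i = j
        · subst hij
          simp [hb_g]
        · have hne : f.1 i ≠ f.1 j := fun hcc => hij (f.2.injective hcc)
          rw [Matrix.of_apply, hb_g, if_neg hne, Matrix.diagonal_apply_ne _ hij]
      rw [hdiag, Matrix.det_diagonal]
    · rw [if_neg hff]
      obtain ⟨i, hi⟩ := hrowzero f f' hff
      apply Matrix.det_eq_zero_of_row_eq_zero i
      intro j
      rw [Matrix.of_apply, hb_g, if_neg (hi j)]
  have hhE : ∀ f f' : S, hk (E f) (E f') = if f = f' then 1 else 0 := by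
    intro f f'
    show hk (ι _) (ι _) = _
    rw [hhk]
    by_cases hff : f = f'
    · subst hff
      rw [if_pos rfl]
      have hdiag : (Matrix.of fun i j => h (b (f.1 i)) (b (f.1 j))) = 1 := by
        ext i j
        by_cases hij : i = j
        · subst hij
          simp [hb_h]
        · have hne : f.1 i ≠ f.1 j := fun hcc => hij (f.2.injective hcc)
          rw [Matrix.of_apply, hb_h, if_neg hne, Matrix.one_apply_ne hij]
      rw [hdiag, Matrix.det_one]
    · rw [if_neg hff]
      obtain ⟨i, hi⟩ := hrowzero f f' hff
      apply Matrix.det_eq_zero_of_row_eq_zero i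
      intro j
      rw [Matrix.of_apply, hb_h, if_neg (hi j)]
  -- quadratic form evaluation
  have key : ∀ (B : Λ →ₗ[ℝ] Λ →ₗ[ℝ] ℝ) (d : S → ℝ),
      (∀ f f', B (E f) (E f') = if f = f' then d f else 0) →
      B w w = ∑ f : S, c f ^ 2 * d f := by
    intro B d hBd
    rw [← hc]
    have h1 : B (∑ f : S, c f • E f) = ∑ f : S, c f • B (E f) := by
      rw [map_sum]
      exact Finset.sum_congr rfl fun f _ => map_smul _ _ _
    rw [h1, LinearMap.sum_apply]
    refine Finset.sum_congr rfl fun f _ => ?_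
    rw [LinearMap.smul_apply, map_sum, smul_eq_mul]
    have h2 : ∀ f' : S, (B (E f)) (c f' • E f') = if f = f' then c f' * d f else 0 := by
      intro f'
      rw [map_smul, smul_eq_mul, hBd]
      by_cases hff : f = f' <;> simp [hff]
    rw [Finset.sum_congr rfl fun f' _ => h2 f', Finset.sum_ite_eq _ f (fun f' => c f' * d f)]
    simp only [Finset.mem_univ, if_true]
    ring
  have hgw : gk w w = ∑ f : S, c f ^ 2 * ∏ i, μ (f.1 i) := key gk _ hgE
  have hhw : hk w w = ∑ f : S, c f ^ 2 * 1 := key hk _ hhE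
  rw [hgw, hhw, Finset.mul_sum]
  apply Finset.sum_le_sum
  intro f _
  rw [mul_one, mul_comm (C ^ k)]
  apply mul_le_mul_of_nonneg_left _ (sq_nonneg (c f))
  calc ∏ i, μ (f.1 i) ≤ ∏ _i : Fin k, C :=
        Finset.prod_le_prod (fun i _ => hμ_nonneg _) (fun i _ => hμC _)
    _ = C ^ k := by simp [Finset.prod_const]
end

section
/- Let A : V → W be a linear map between finite-dimensional real inner product spaces. Then the induced map A^{∧k} : Λ^k(V) → Λ^k(W) on k-th exterior powers satisfies ‖A^{∧k}‖ ≤ ‖A‖^k, where the norms are operator norms with respect to the induced inner products on the exterior powers. -/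
open scoped InnerProductSpace

private lemma gram_det_aux {n k : ℕ} (s t : Finset (Fin n)) (hs : s.card = k)
    (ht : t.card = k) (d : Fin n → ℝ) :
    Matrix.det (Matrix.of fun i j : Fin k =>
      if s.orderEmbOfFin hs i = t.orderEmbOfFin ht j then d (s.orderEmbOfFin hs i) else 0)
    = if s = t then ∏ i, d (s.orderEmbOfFin hs i) else 0 := by
  by_cases hst : s = t
  · subst hst
    rw [if_pos rfl, ← Matrix.det_diagonal (d := fun i => d (s.orderEmbOfFin hs i))]
    congr 1
    ext i j
    by_cases hij : i = j
    · subst hij; simp [Matrix.diagonal]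
    · have h2 : s.orderEmbOfFin hs i ≠ s.orderEmbOfFin hs j :=
        fun h => hij ((s.orderEmbOfFin hs).injective h)
      simp [Matrix.diagonal, hij, h2]
  · rw [if_neg hst]
    have hsub : ¬ s ⊆ t := fun h =>
      hst (Finset.eq_of_subset_of_card_le h (le_of_eq (ht.trans hs.symm)))
    obtain ⟨a, has, hat⟩ := Finset.not_subset.mp hsub
    have ha : a ∈ Set.range (s.orderEmbOfFin hs) := by
      rw [Finset.range_orderEmbOfFin]; exact has
    obtain ⟨i, hi⟩ := ha
    apply Matrix.det_eq_zero_of_row_eq_zero i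
    intro j
    have hne : s.orderEmbOfFin hs i ≠ t.orderEmbOfFin ht j := by
      rw [hi]; intro h; exact hat (h ▸ Finset.orderEmbOfFin_mem t ht j)
    simp [hne]

private lemma inner_sum_sum_ite {ι E : Type*} [Fintype ι] [DecidableEq ι]
    [NormedAddCommGroup E] [InnerProductSpace ℝ E]
    (c : ι → ℝ) (y : ι → E) (P : ι → ℝ)
    (h : ∀ s t, ⟪y s, y t⟫_ℝ = if s = t then P s else 0) :
    ⟪∑ s, c s • y s, ∑ s, c s • y s⟫_ℝ = ∑ s, c s ^ 2 * P s := by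
  rw [sum_inner]
  refine Finset.sum_congr rfl fun s _ => ?_
  rw [inner_sum]
  have : ∀ t, ⟪c s • y s, c t • y t⟫_ℝ = if s = t then c s ^ 2 * P s else 0 := by
    intro t
    rw [real_inner_smul_left, real_inner_smul_right, h]
    by_cases hst : s = t
    · subst hst; simp [sq]; ring
    · simp [hst]
  simp only [this]
  simp

private lemma norm_le_of_orthogonal_images {ι E F : Type*} [Fintype ι] [DecidableEq ι]
    [NormedAddCommGroup E] [InnerProductSpace ℝ E]
    [NormedAddCommGroup F] [InnerProductSpace ℝ F]
    (T : E →L[ℝ] F) (y : ι → E) (C : ℝ) (hC : 0 ≤ C)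
    (hon : Orthonormal ℝ y) (hsp : ⊤ ≤ Submodule.span ℝ (Set.range y))
    (P : ι → ℝ) (hP0 : ∀ s, 0 ≤ P s) (hPC : ∀ s, P s ≤ C ^ 2)
    (hT : ∀ s t, ⟪T (y s), T (y t)⟫_ℝ = if s = t then P s else 0) :
    ‖T‖ ≤ C := by
  refine T.opNorm_le_bound hC fun x => ?_
  let b : OrthonormalBasis ι ℝ E := .mk hon hsp
  have hb : ∀ i, b i = y i := fun i => congrFun (OrthonormalBasis.coe_mk hon hsp) i
  have hx : ∑ s, b.repr x s • y s = x := by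
    conv_rhs => rw [← b.sum_repr x]
    exact Finset.sum_congr rfl fun s _ => by rw [hb]
  have hTx : T x = ∑ s, b.repr x s • T (y s) := by
    conv_lhs => rw [← hx]
    rw [map_sum]
    exact Finset.sum_congr rfl fun s _ => by rw [map_smul]
  have hnx : ‖x‖ ^ 2 = ∑ s, b.repr x s ^ 2 := by
    have h2 : ⟪x, x⟫_ℝ = ∑ s, b.repr x s ^ 2 * 1 := by
      conv_lhs => rw [← hx]
      exact inner_sum_sum_ite _ _ (fun _ => 1) (orthonormal_iff_ite.mp hon)
    rw [← real_inner_self_eq_norm_sq, h2]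
    exact Finset.sum_congr rfl fun s _ => by ring
  have h1 : ‖T x‖ ^ 2 ≤ (C * ‖x‖) ^ 2 := by
    rw [← real_inner_self_eq_norm_sq, hTx, inner_sum_sum_ite _ _ P hT, mul_pow, hnx,
      Finset.mul_sum]
    exact Finset.sum_le_sum fun s _ => by
      nlinarith [hPC s, sq_nonneg (b.repr x s), hP0 s]
  have h3 := Real.sqrt_le_sqrt h1
  rwa [Real.sqrt_sq (norm_nonneg _), Real.sqrt_sq (mul_nonneg hC (norm_nonneg x))] at h3

/-- If `A : V → W` is a linear map between finite-dimensional real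
inner product spaces, then the induced map `A^{∧k}` on `k`-th exterior powers
(equipped with the induced inner products, characterized by the Gram determinant
formula) satisfies `‖A^{∧k}‖ ≤ ‖A‖^k` for the operator norms. -/
theorem stmt8
    {V W : Type*}
    [NormedAddCommGroup V] [InnerProductSpace ℝ V] [FiniteDimensional ℝ V]
    [NormedAddCommGroup W] [InnerProductSpace ℝ W] [FiniteDimensional ℝ W]
    (A : V →L[ℝ] W) (k : ℕ)
    -- the k-th exterior powers with their induced inner product structures
    (ΛV ΛW : Type*)
    [NormedAddCommGroup ΛV] [InnerProductSpace ℝ ΛV]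
    [NormedAddCommGroup ΛW] [InnerProductSpace ℝ ΛW]
    (ιV : V [⋀^Fin k]→ₗ[ℝ] ΛV) (ιW : W [⋀^Fin k]→ₗ[ℝ] ΛW)
    (hspanV : Submodule.span ℝ (Set.range ιV) = ⊤)
    (hspanW : Submodule.span ℝ (Set.range ιW) = ⊤)
    (hgramV : ∀ v w : Fin k → V,
      ⟪ιV v, ιV w⟫_ℝ = Matrix.det (Matrix.of fun i j => ⟪v i, w j⟫_ℝ))
    (hgramW : ∀ v w : Fin k → W,
      ⟪ιW v, ιW w⟫_ℝ = Matrix.det (Matrix.of fun i j => ⟪v i, w j⟫_ℝ))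
    -- the induced map A^{∧k}
    (Ak : ΛV →L[ℝ] ΛW)
    (hAk : ∀ v : Fin k → V, Ak (ιV v) = ιW (fun i => A (v i))) :
    ‖Ak‖ ≤ ‖A‖ ^ k := by
  classical
  -- spectral theory for B = A† ∘ A
  set T : V →ₗ[ℝ] V := ((ContinuousLinearMap.adjoint A ∘L A : V →L[ℝ] V) : V →ₗ[ℝ] V) with hTdef
  have hT : T.IsSymmetric := by
    intro x y
    simp [T, ContinuousLinearMap.adjoint_inner_left, ContinuousLinearMap.adjoint_inner_right]
  set n := Module.finrank ℝ V with hn'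
  have hn : Module.finrank ℝ V = n := rfl
  set e := hT.eigenvectorBasis hn with he
  set μ := hT.eigenvalues hn with hμdef
  have hTe : ∀ p, T (e p) = μ p • e p := fun p => by
    rw [he, hμdef]
    exact_mod_cast hT.apply_eigenvectorBasis hn p
  have hee : ∀ p q, ⟪e p, e q⟫_ℝ = if p = q then 1 else 0 :=
    orthonormal_iff_ite.mp e.orthonormal
  have hAe : ∀ p q, ⟪A (e p), A (e q)⟫_ℝ = if p = q then μ p else 0 := by
    intro p q
    calc ⟪A (e p), A (e q)⟫_ℝ = ⟪T (e p), e q⟫_ℝ := by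
          simp [T, ContinuousLinearMap.adjoint_inner_left]
      _ = μ p * ⟪e p, e q⟫_ℝ := by rw [hTe p, real_inner_smul_left]
      _ = if p = q then μ p else 0 := by rw [hee]; split <;> simp
  have hμ : ∀ p, μ p = ‖A (e p)‖ ^ 2 := by
    intro p
    have h := hAe p p
    rw [if_pos rfl, real_inner_self_eq_norm_sq] at h
    exact h.symm
  have hμ0 : ∀ p, 0 ≤ μ p := fun p => (hμ p) ▸ sq_nonneg _
  have hμle : ∀ p, μ p ≤ ‖A‖ ^ 2 := by
    intro p
    rw [hμ p]
    have h1 : ‖A (e p)‖ ≤ ‖A‖ := by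
      calc ‖A (e p)‖ ≤ ‖A‖ * ‖e p‖ := A.le_opNorm _
        _ = ‖A‖ := by rw [e.orthonormal.1 p, mul_one]
    exact pow_le_pow_left₀ (norm_nonneg _) h1 2
  -- the orthonormal family of decomposables indexed by k-subsets
  let ind := {s : Finset (Fin n) // s.card = k}
  let I : ind → Fin k → Fin n := fun s => s.1.orderEmbOfFin s.2
  let E : ind → ΛV := fun s => ιV fun i => e (I s i)
  have honE : Orthonormal ℝ E := by
    rw [orthonormal_iff_ite]
    intro s t
    have hM : (Matrix.of fun i j => ⟪e (I s i), e (I t j)⟫_ℝ)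
        = Matrix.of fun i j : Fin k =>
            if I s i = I t j then (fun _ : Fin n => (1:ℝ)) (I s i) else 0 := by
      ext i j; exact hee _ _
    calc ⟪E s, E t⟫_ℝ
        = Matrix.det (Matrix.of fun i j => ⟪e (I s i), e (I t j)⟫_ℝ) :=
          hgramV _ _
      _ = if s.1 = t.1 then ∏ i : Fin k, (1:ℝ) else 0 := by
          rw [hM]; exact gram_det_aux s.1 t.1 s.2 t.2 (fun _ => 1)
      _ = if s = t then 1 else 0 := by
          by_cases hst : s = t
          · simp [hst]
          · have h2 : s.1 ≠ t.1 := fun h => hst (Subtype.ext h)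
            simp [hst, h2]
  have hmem : ∀ v : Fin k → V, ιV v ∈ Submodule.span ℝ (Set.range E) := by
    intro v
    have hv : v = fun i => ∑ j, e.repr (v i) j • e j :=
      funext fun i => (e.sum_repr (v i)).symm
    have hexp : ιV v
        = ∑ r : Fin k → Fin n, (∏ i, e.repr (v i) (r i)) • ιV (fun i => e (r i)) := by
      calc ιV v = ιV.toMultilinearMap (fun i => ∑ j, e.repr (v i) j • e j) := by
            rw [← hv]; rfl
        _ = ∑ r : Fin k → Fin n,
              ιV.toMultilinearMap (fun i => e.repr (v i) (r i) • e (r i)) :=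
            ιV.toMultilinearMap.map_sum (fun i j => e.repr (v i) j • e j)
        _ = ∑ r : Fin k → Fin n,
              (∏ i, e.repr (v i) (r i)) • ιV (fun i => e (r i)) :=
            Finset.sum_congr rfl fun r _ =>
              ιV.toMultilinearMap.map_smul_univ _ _
    rw [hexp]
    refine Submodule.sum_mem _ fun r _ => Submodule.smul_mem _ _ ?_
    by_cases hr : Function.Injective r
    · have hs : (Finset.univ.image r).card = k := by
        rw [Finset.card_image_of_injective _ hr, Finset.card_univ, Fintype.card_fin]
      set s : ind := ⟨Finset.univ.image r, hs⟩ with hsdef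
      have hmem' : ∀ i, r i ∈ s.1 := fun i =>
        Finset.mem_image_of_mem r (Finset.mem_univ i)
      have hbij : Function.Bijective (fun i => (⟨r i, hmem' i⟩ : {x // x ∈ s.1})) := by
        rw [Fintype.bijective_iff_injective_and_card]
        refine ⟨fun a b h => hr (congrArg Subtype.val h), ?_⟩
        rw [Fintype.card_fin, Fintype.card_coe]
        exact hs.symm
      let f' : Fin k ≃ {x // x ∈ s.1} := Equiv.ofBijective _ hbij
      let σ : Equiv.Perm (Fin k) := f'.trans (s.1.orderIsoOfFin s.2).toEquiv.symm
      have hσ : ∀ i, I s (σ i) = r i := by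
        intro i
        have h1 : (s.1.orderIsoOfFin s.2) (σ i) = ⟨r i, hmem' i⟩ := by
          simp [σ, f']
        calc I s (σ i) = ((s.1.orderIsoOfFin s.2) (σ i) : Fin n) :=
              (Finset.coe_orderIsoOfFin_apply s.1 s.2 (σ i)).symm
          _ = r i := by rw [h1]
      have hre : (fun i => e (r i)) = (fun i => e (I s i)) ∘ σ :=
        funext fun i => by simp [Function.comp, hσ i]
      rw [hre, AlternatingMap.map_perm]
      have hEs : E s ∈ Submodule.span ℝ (Set.range E) := Submodule.subset_span ⟨s, rfl⟩
      rcases Int.units_eq_one_or (Equiv.Perm.sign σ) with h | h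
      · rw [h, one_smul]; exact hEs
      · rw [h]
        have : (-1 : ℤˣ) • ιV (fun i => e (I s i)) = -(E s) := by
          simp [Units.smul_def, E]
        rw [this]
        exact Submodule.neg_mem _ hEs
    · have hni : ¬ Function.Injective (fun i => e (r i)) := fun hinj =>
        hr fun a b hab => hinj (congrArg e hab)
      rw [AlternatingMap.map_eq_zero_of_not_injective ιV _ hni]
      exact Submodule.zero_mem _
  have hspE : ⊤ ≤ Submodule.span ℝ (Set.range E) := by
    rw [← hspanV]
    exact Submodule.span_le.mpr (by rintro _ ⟨v, rfl⟩; exact hmem v)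
  have hAkE : ∀ s t : ind,
      ⟪Ak (E s), Ak (E t)⟫_ℝ = if s = t then ∏ i, μ (I s i) else 0 := by
    intro s t
    have hM : (Matrix.of fun i j => ⟪A (e (I s i)), A (e (I t j))⟫_ℝ)
        = Matrix.of fun i j : Fin k => if I s i = I t j then μ (I s i) else 0 := by
      ext i j; exact hAe _ _
    calc ⟪Ak (E s), Ak (E t)⟫_ℝ
        = ⟪ιW (fun i => A (e (I s i))), ιW (fun i => A (e (I t i)))⟫_ℝ := by
          rw [hAk, hAk]
      _ = Matrix.det (Matrix.of fun i j => ⟪A (e (I s i)), A (e (I t j))⟫_ℝ) :=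
          hgramW _ _
      _ = if s.1 = t.1 then ∏ i : Fin k, μ (I s i) else 0 := by
          rw [hM]; exact gram_det_aux s.1 t.1 s.2 t.2 μ
      _ = if s = t then ∏ i : Fin k, μ (I s i) else 0 := by
          by_cases hst : s = t
          · simp [hst]
          · have h2 : s.1 ≠ t.1 := fun h => hst (Subtype.ext h)
            simp [hst, h2]
  refine norm_le_of_orthogonal_images Ak E (‖A‖ ^ k) (by positivity) honE hspE
    (fun s => ∏ i, μ (I s i)) (fun s => Finset.prod_nonneg fun i _ => hμ0 _)
    (fun s => ?_) hAkE
  calc ∏ i : Fin k, μ (I s i) ≤ ∏ _i : Fin k, ‖A‖ ^ 2 :=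
        Finset.prod_le_prod (fun i _ => hμ0 _) (fun i _ => hμle _)
    _ = (‖A‖ ^ k) ^ 2 := by
        rw [Finset.prod_const, Finset.card_univ, Fintype.card_fin, ← pow_mul, ← pow_mul,
          Nat.mul_comm]
end
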